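/- Each step of the Goodstein process strictly decreases the associated ordinal: for every natural number b ≥ 2 and every natural number m ≥ 1, O(b+1, B(b, m) − 1) < O(b, m). -/

import Mathlib

/-- `hsub b u m` substitutes the value `u` for the base `b` throughout the
hereditary base-`b` representation of `m` (with `hsub b u 0 = 0`). -/
def hsub (b u : ℕ) (m : ℕ) : ℕ :=
  if m = 0 then 0
  else
    u ^ hsub b u (Nat.log b m) * (m / b ^ Nat.log b m) + hsub b u (m % b ^ Nat.log b m)
termination_by m
decreasing_by
  · exact Nat.log_lt_self b (by assumption)
  · have hpos : 0 < b ^ Nat.log b m := by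
      rcases Nat.eq_zero_or_pos b with hb | hb
      · simp [hb]
      · exact pow_pos hb _
    exact lt_of_lt_of_le (Nat.mod_lt _ hpos) (Nat.pow_log_le_self b (by assumption))

/-- Goodstein's base-change ("bumping") function: replace the base `b` by `b + 1`
throughout the hereditary base-`b` representation of `m` (with `B b 0 = 0`). -/
def B (b m : ℕ) : ℕ := hsub b (b + 1) m

/-- The Goodstein sequence of `m`: `G 1 m = m`, and `G (k+1) m = B (k+1) (G k m) - 1`
for `k ≥ 1` (truncated subtraction), so the `k`-th term is written in hereditary
base `k + 1`. -/
def G : ℕ → ℕ → ℕ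
  | 0, m => m
  | 1, m => m
  | (k + 2), m => B (k + 2) (G (k + 1) m) - 1

/-- The auxiliary Goodstein-type sequence: `L 1 k = k ^ k` (written in hereditary
base `k`), and `L (n+1) k = B (k+n-1) (L n k) - 1` for `n ≥ 1` (truncated
subtraction), so the `n`-th term is written in hereditary base `k + n - 1`. -/
def L : ℕ → ℕ → ℕ
  | 0, k => k ^ k
  | 1, k => k ^ k
  | (n + 2), k => B (k + n) (L (n + 1) k) - 1

/-- `O b m` is the ordinal obtained by substituting `ω` for the base `b`
throughout the hereditary base-`b` representation of `m` (with `O b 0 = 0`). -/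
noncomputable def O (b : ℕ) (m : ℕ) : Ordinal :=
  if m = 0 then 0
  else
    Ordinal.omega0 ^ O b (Nat.log b m) * ((m / b ^ Nat.log b m : ℕ) : Ordinal)
      + O b (m % b ^ Nat.log b m)
termination_by m
decreasing_by
  · exact Nat.log_lt_self b (by assumption)
  · have hpos : 0 < b ^ Nat.log b m := by
      rcases Nat.eq_zero_or_pos b with hb | hb
      · simp [hb]
      · exact pow_pos hb _
    exact lt_of_lt_of_le (Nat.mod_lt _ hpos) (Nat.pow_log_le_self b (by assumption))

open Ordinal in
lemma O_eq (b m : ℕ) (hm : m ≠ 0) :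
    O b m = Ordinal.omega0 ^ O b (Nat.log b m) * ((m / b ^ Nat.log b m : ℕ) : Ordinal)
      + O b (m % b ^ Nat.log b m) := by
  rw [O]; simp [hm]

lemma hsub_eq (b u m : ℕ) (hm : m ≠ 0) :
    hsub b u m = u ^ hsub b u (Nat.log b m) * (m / b ^ Nat.log b m)
      + hsub b u (m % b ^ Nat.log b m) := by
  rw [hsub]; simp [hm]

lemma canon_log {u E d R : ℕ} (hu : 1 < u) (hd0 : 0 < d) (hd : d < u) (hR : R < u ^ E) :
    Nat.log u (u ^ E * d + R) = E := by
  apply Nat.log_eq_of_pow_le_of_lt_pow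
  · calc u ^ E = u ^ E * 1 := (mul_one _).symm
      _ ≤ u ^ E * d := Nat.mul_le_mul_left _ hd0
      _ ≤ u ^ E * d + R := Nat.le_add_right _ _
  · calc u ^ E * d + R < u ^ E * d + u ^ E := by omega
      _ = u ^ E * (d + 1) := by ring
      _ ≤ u ^ E * u := Nat.mul_le_mul_left _ hd
      _ = u ^ (E + 1) := (pow_succ u E).symm

lemma canon_div {u E d R : ℕ} (hu : 0 < u) (hR : R < u ^ E) :
    (u ^ E * d + R) / u ^ E = d := by
  rw [add_comm, Nat.add_mul_div_left _ _ (Nat.pow_pos hu), Nat.div_eq_of_lt hR,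
    zero_add]

lemma canon_mod {u E d R : ℕ} (hR : R < u ^ E) :
    (u ^ E * d + R) % u ^ E = R := by
  rw [add_comm, Nat.add_mul_mod_self_left, Nat.mod_eq_of_lt hR]

lemma hsub_key (b u : ℕ) (hb : 2 ≤ b) (hu : b ≤ u) : ∀ N m n : ℕ,
    (2 * n ≤ N → m < n → hsub b u m < hsub b u n) ∧
    (2 * n + 1 ≤ N → m < b ^ n → hsub b u m < u ^ hsub b u n) := by
  intro N
  induction N using Nat.strong_induction_on with
  | _ N IH =>
    intro m n
    have hu1 : 1 < u := by omega
    constructor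
    · -- monotonicity
      intro hN hmn
      have hn0 : n ≠ 0 := by omega
      have hen : Nat.log b n < n := Nat.log_lt_self b hn0
      have hdn1 : 1 ≤ n / b ^ Nat.log b n :=
        Nat.one_le_div_iff (Nat.pow_pos (by omega)) |>.mpr
          (Nat.pow_log_le_self b hn0)
      have hlow : u ^ hsub b u (Nat.log b n) ≤ hsub b u n := by
        rw [hsub_eq b u n hn0]
        calc u ^ hsub b u (Nat.log b n)
            = u ^ hsub b u (Nat.log b n) * 1 := (mul_one _).symm
          _ ≤ u ^ hsub b u (Nat.log b n) * (n / b ^ Nat.log b n) :=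
              Nat.mul_le_mul_left _ hdn1
          _ ≤ _ := Nat.le_add_right _ _
      rcases Nat.eq_zero_or_pos m with hm0 | hm0
      · subst hm0
        have h0 : hsub b u 0 = 0 := by rw [hsub]; simp
        rw [h0]
        exact lt_of_lt_of_le (Nat.pow_pos (by omega)) hlow
      · have hm0' : m ≠ 0 := by omega
        have hle : Nat.log b m ≤ Nat.log b n := Nat.log_mono_right hmn.le
        rcases lt_or_eq_of_le hle with hlt | heq
        · -- smaller exponent
          have hmb : m < b ^ Nat.log b n := by
            calc m < b ^ (Nat.log b m + 1) := Nat.lt_pow_succ_log_self (by omega) m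
              _ ≤ b ^ Nat.log b n := Nat.pow_le_pow_right (by omega) hlt
          have hkey := (IH (2 * Nat.log b n + 1) (by omega) m (Nat.log b n)).2 le_rfl hmb
          exact lt_of_lt_of_le hkey hlow
        · -- same exponent
          have hen' : Nat.log b m < n := heq ▸ hen
          have hrm : m % b ^ Nat.log b m < b ^ Nat.log b m :=
            Nat.mod_lt _ (Nat.pow_pos (by omega))
          have hRm : hsub b u (m % b ^ Nat.log b m) < u ^ hsub b u (Nat.log b m) :=
            (IH (2 * Nat.log b m + 1) (by omega) _ _).2 le_rfl hrm
          have hdle : m / b ^ Nat.log b m ≤ n / b ^ Nat.log b m :=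
            Nat.div_le_div_right hmn.le
          rw [hsub_eq b u m hm0', hsub_eq b u n hn0, ← heq]
          rcases lt_or_eq_of_le hdle with hdlt | hdeq
          · calc u ^ hsub b u (Nat.log b m) * (m / b ^ Nat.log b m)
                  + hsub b u (m % b ^ Nat.log b m)
                < u ^ hsub b u (Nat.log b m) * (m / b ^ Nat.log b m)
                  + u ^ hsub b u (Nat.log b m) := by omega
              _ = u ^ hsub b u (Nat.log b m) * (m / b ^ Nat.log b m + 1) := by ring
              _ ≤ u ^ hsub b u (Nat.log b m) * (n / b ^ Nat.log b m) :=
                  Nat.mul_le_mul_left _ hdlt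
              _ ≤ _ := Nat.le_add_right _ _
          · have hrlt : m % b ^ Nat.log b m < n % b ^ Nat.log b m := by
              have h1 := Nat.div_add_mod m (b ^ Nat.log b m)
              have h2 := Nat.div_add_mod n (b ^ Nat.log b m)
              rw [← hdeq] at h2
              omega
            have hrn : n % b ^ Nat.log b m < n :=
              lt_of_lt_of_le (Nat.mod_lt _ (Nat.pow_pos (by omega)))
                (by rw [heq]; exact Nat.pow_log_le_self b hn0)
            have hmono2 := (IH (2 * (n % b ^ Nat.log b m)) (by omega) _ _).1 le_rfl hrlt
            rw [hdeq]
            exact Nat.add_lt_add_left hmono2 _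
    · -- bound
      intro hN hmb
      rcases Nat.eq_zero_or_pos m with hm0 | hm0
      · subst hm0
        have h0 : hsub b u 0 = 0 := by rw [hsub]; simp
        rw [h0]
        exact Nat.pow_pos (by omega)
      · have hm0' : m ≠ 0 := by omega
        have hen : Nat.log b m < n := Nat.log_lt_of_lt_pow hm0' hmb
        have hrm : m % b ^ Nat.log b m < b ^ Nat.log b m :=
          Nat.mod_lt _ (Nat.pow_pos (by omega))
        have hRm : hsub b u (m % b ^ Nat.log b m) < u ^ hsub b u (Nat.log b m) :=
          (IH (2 * Nat.log b m + 1) (by omega) _ _).2 le_rfl hrm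
        have hmono : hsub b u (Nat.log b m) < hsub b u n :=
          (IH (2 * n) (by omega) _ n).1 le_rfl hen
        have hd : m / b ^ Nat.log b m < b := by
          rw [Nat.div_lt_iff_lt_mul (Nat.pow_pos (by omega))]
          calc m < b ^ (Nat.log b m + 1) := Nat.lt_pow_succ_log_self (by omega) m
            _ = b * b ^ Nat.log b m := by ring
        rw [hsub_eq b u m hm0']
        calc u ^ hsub b u (Nat.log b m) * (m / b ^ Nat.log b m)
              + hsub b u (m % b ^ Nat.log b m)
            < u ^ hsub b u (Nat.log b m) * (m / b ^ Nat.log b m)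
              + u ^ hsub b u (Nat.log b m) := by omega
          _ = u ^ hsub b u (Nat.log b m) * (m / b ^ Nat.log b m + 1) := by ring
          _ ≤ u ^ hsub b u (Nat.log b m) * u := Nat.mul_le_mul_left _ (by omega)
          _ = u ^ (hsub b u (Nat.log b m) + 1) := (pow_succ u _).symm
          _ ≤ u ^ hsub b u n := Nat.pow_le_pow_right (by omega) (by omega)

open Ordinal in
lemma O_key.{u} (c : ℕ) (hc : 2 ≤ c) : ∀ N m n : ℕ,
    (2 * n ≤ N → m < n → O.{u} c m < O.{u} c n) ∧
    (2 * n + 1 ≤ N → m < c ^ n → O.{u} c m < Ordinal.omega0.{u} ^ O.{u} c n) := by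
  intro N
  induction N using Nat.strong_induction_on with
  | _ N IH =>
    intro m n
    constructor
    · -- monotonicity
      intro hN hmn
      have hn0 : n ≠ 0 := by omega
      have hen : Nat.log c n < n := Nat.log_lt_self c hn0
      have hdn1 : 1 ≤ n / c ^ Nat.log c n :=
        Nat.one_le_div_iff (Nat.pow_pos (by omega)) |>.mpr
          (Nat.pow_log_le_self c hn0)
      have hlow : omega0 ^ O c (Nat.log c n) ≤ O c n := by
        rw [O_eq c n hn0]
        calc omega0 ^ O c (Nat.log c n)
            = omega0 ^ O c (Nat.log c n) * 1 := (mul_one _).symm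
          _ ≤ omega0 ^ O c (Nat.log c n) * ((n / c ^ Nat.log c n : ℕ) : Ordinal) :=
              mul_le_mul_right (by exact_mod_cast Nat.one_le_cast.mpr hdn1) _
          _ ≤ _ := le_add_right le_rfl
      rcases Nat.eq_zero_or_pos m with hm0 | hm0
      · subst hm0
        have h0 : O c 0 = 0 := by rw [O]; simp
        rw [h0]
        exact lt_of_lt_of_le (opow_pos _ omega0_pos) hlow
      · have hm0' : m ≠ 0 := by omega
        have hle : Nat.log c m ≤ Nat.log c n := Nat.log_mono_right hmn.le
        rcases lt_or_eq_of_le hle with hlt | heq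
        · have hmb : m < c ^ Nat.log c n := by
            calc m < c ^ (Nat.log c m + 1) := Nat.lt_pow_succ_log_self (by omega) m
              _ ≤ c ^ Nat.log c n := Nat.pow_le_pow_right (by omega) hlt
          have hkey := (IH (2 * Nat.log c n + 1) (by omega) m (Nat.log c n)).2 le_rfl hmb
          exact lt_of_lt_of_le hkey hlow
        · -- same exponent
          have hen' : Nat.log c m < n := heq ▸ hen
          have hrm : m % c ^ Nat.log c m < c ^ Nat.log c m :=
            Nat.mod_lt _ (Nat.pow_pos (by omega))
          have hRm : O c (m % c ^ Nat.log c m) < omega0 ^ O c (Nat.log c m) :=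
            (IH (2 * Nat.log c m + 1) (by omega) _ _).2 le_rfl hrm
          have hdle : m / c ^ Nat.log c m ≤ n / c ^ Nat.log c m :=
            Nat.div_le_div_right hmn.le
          rw [O_eq c m hm0', O_eq c n hn0, ← heq]
          rcases lt_or_eq_of_le hdle with hdlt | hdeq
          · calc omega0 ^ O c (Nat.log c m) * ((m / c ^ Nat.log c m : ℕ) : Ordinal)
                  + O c (m % c ^ Nat.log c m)
                < omega0 ^ O c (Nat.log c m) * ((m / c ^ Nat.log c m : ℕ) : Ordinal)
                  + omega0 ^ O c (Nat.log c m) := add_lt_add_right hRm _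
              _ = omega0 ^ O c (Nat.log c m) * ((m / c ^ Nat.log c m + 1 : ℕ) : Ordinal) := by
                  push_cast; rw [mul_add_one]
              _ ≤ omega0 ^ O c (Nat.log c m) * ((n / c ^ Nat.log c m : ℕ) : Ordinal) :=
                  mul_le_mul_right (by exact_mod_cast Nat.cast_le.mpr hdlt) _
              _ ≤ _ := le_add_right le_rfl
          · have hrlt : m % c ^ Nat.log c m < n % c ^ Nat.log c m := by
              have h1 := Nat.div_add_mod m (c ^ Nat.log c m)
              have h2 := Nat.div_add_mod n (c ^ Nat.log c m)
              rw [← hdeq] at h2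
              omega
            have hrn : n % c ^ Nat.log c m < n :=
              lt_of_lt_of_le (Nat.mod_lt _ (Nat.pow_pos (by omega)))
                (by rw [heq]; exact Nat.pow_log_le_self c hn0)
            have hmono2 := (IH (2 * (n % c ^ Nat.log c m)) (by omega) _ _).1 le_rfl hrlt
            rw [hdeq]
            exact add_lt_add_right hmono2 _
    · -- bound
      intro hN hmb
      rcases Nat.eq_zero_or_pos m with hm0 | hm0
      · subst hm0
        have h0 : O c 0 = 0 := by rw [O]; simp
        rw [h0]
        exact opow_pos _ omega0_pos
      · have hm0' : m ≠ 0 := by omega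
        have hen : Nat.log c m < n := Nat.log_lt_of_lt_pow hm0' hmb
        have hrm : m % c ^ Nat.log c m < c ^ Nat.log c m :=
          Nat.mod_lt _ (Nat.pow_pos (by omega))
        have hRm : O c (m % c ^ Nat.log c m) < omega0 ^ O c (Nat.log c m) :=
          (IH (2 * Nat.log c m + 1) (by omega) _ _).2 le_rfl hrm
        have hmono : O c (Nat.log c m) < O c n :=
          (IH (2 * n) (by omega) _ n).1 le_rfl hen
        rw [O_eq c m hm0']
        calc omega0 ^ O c (Nat.log c m) * ((m / c ^ Nat.log c m : ℕ) : Ordinal)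
              + O c (m % c ^ Nat.log c m)
            < omega0 ^ O c (Nat.log c m) * ((m / c ^ Nat.log c m : ℕ) : Ordinal)
              + omega0 ^ O c (Nat.log c m) := add_lt_add_right hRm _
          _ = omega0 ^ O c (Nat.log c m) * ((m / c ^ Nat.log c m + 1 : ℕ) : Ordinal) := by
              push_cast; rw [mul_add_one]
          _ ≤ omega0 ^ O c (Nat.log c m) * omega0 :=
              mul_le_mul_right (nat_lt_omega0 _).le _
          _ = omega0 ^ (Order.succ (O c (Nat.log c m))) := (opow_succ _ _).symm
          _ ≤ omega0 ^ O c n := opow_le_opow_right omega0_pos (Order.succ_le_of_lt hmono)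

open Ordinal in
lemma O_hsub.{u} (b : ℕ) (hb : 2 ≤ b) :
    ∀ m : ℕ, O.{u} (b + 1) (hsub b (b + 1) m) = O.{u} b m := by
  intro m
  induction m using Nat.strong_induction_on with
  | _ m IH =>
    rcases Nat.eq_zero_or_pos m with hm0 | hm0
    · subst hm0
      rw [show hsub b (b + 1) 0 = 0 by rw [hsub]; simp]
      rw [show O.{u} (b+1) 0 = 0 by rw [O]; simp, show O.{u} b 0 = 0 by rw [O]; simp]
    · have hm0' : m ≠ 0 := by omega
      have he : Nat.log b m < m := Nat.log_lt_self b hm0'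
      have hrm : m % b ^ Nat.log b m < b ^ Nat.log b m :=
        Nat.mod_lt _ (Nat.pow_pos (by omega))
      have hrm' : m % b ^ Nat.log b m < m :=
        lt_of_lt_of_le hrm (Nat.pow_log_le_self b hm0')
      have hd1 : 1 ≤ m / b ^ Nat.log b m :=
        Nat.one_le_div_iff (Nat.pow_pos (by omega)) |>.mpr
          (Nat.pow_log_le_self b hm0')
      have hd : m / b ^ Nat.log b m < b := by
        rw [Nat.div_lt_iff_lt_mul (Nat.pow_pos (by omega))]
        calc m < b ^ (Nat.log b m + 1) := Nat.lt_pow_succ_log_self (by omega) m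
          _ = b * b ^ Nat.log b m := by ring
      have hR : hsub b (b + 1) (m % b ^ Nat.log b m)
          < (b + 1) ^ hsub b (b + 1) (Nat.log b m) :=
        (hsub_key b (b + 1) hb (by omega) (2 * Nat.log b m + 1) _ _).2 le_rfl hrm
      have hlog := canon_log (u := b + 1) (by omega) hd1 (by omega) hR
      have hdiv := canon_div (u := b + 1) (d := m / b ^ Nat.log b m) (by omega) hR
      have hmod := canon_mod (u := b + 1) (d := m / b ^ Nat.log b m) hR
      have hpos : 0 < (b + 1) ^ hsub b (b + 1) (Nat.log b m) * (m / b ^ Nat.log b m) :=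
        Nat.mul_pos (Nat.pow_pos (by omega)) hd1
      rw [hsub_eq b (b + 1) m hm0']
      rw [O_eq (b + 1) _ (by omega)]
      rw [hlog, hdiv, hmod, IH _ he, IH _ hrm']
      rw [O_eq b m hm0']

/-- Each step of the Goodstein process strictly decreases the associated
ordinal: for every `b ≥ 2` and every `m ≥ 1`, `O (b+1) (B b m - 1) < O b m`. -/
theorem goodstein_step_ordinal_decreases (b m : ℕ) (hb : 2 ≤ b) (hm : 1 ≤ m) :
    O (b + 1) (B b m - 1) < O b m := by
  have h0 : hsub b (b + 1) 0 = 0 := by rw [hsub]; simp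
  have hpos : 0 < B b m := by
    have hmono := (hsub_key b (b + 1) hb (by omega) (2 * m) 0 m).1 le_rfl (by omega)
    unfold B
    omega
  calc O (b + 1) (B b m - 1) < O (b + 1) (B b m) :=
        (O_key (b + 1) (by omega) (2 * B b m) (B b m - 1) (B b m)).1 le_rfl (by omega)
    _ = O b m := O_hsub b hb m
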